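/- Let d ≥ 1 and let π^d be a positive, continuously differentiable probability density on ℝ^d, with roughness I_d(x) = (1/d)·Σ_{i=1}^d (∂ log π^d(x)/∂x_i)². Define h(ℓ) = 2ℓ²·E_{X∼π^d}[Φ(−ℓ·√(I_d(X))/2)] and the asymptotic acceptance rate a(ℓ) = 2·E_{X∼π^d}[Φ(−ℓ·√(I_d(X))/2)] for ℓ > 0. If ℓ̂ ∈ (0,∞) satisfies h(ℓ̂) ≥ h(ℓ) for all ℓ > 0, then a(ℓ̂) ≤ 2Φ(−m̂), where m̂ is the unique positive real number satisfying 2Φ(−m̂) = m̂·φ(m̂); in particular a(ℓ̂) ≤ 0.2345 (i.e., a(ℓ̂) ≤ 0.234 to three decimal places). -/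

import Mathlib

open MeasureTheory

/-- The standard normal cumulative distribution function
`Φ(x) = ∫_{−∞}^x (2π)^{−1/2} e^{−t²/2} dt`. -/
noncomputable def Phi (x : ℝ) : ℝ :=
  ∫ t in Set.Iic x, (Real.sqrt (2 * Real.pi))⁻¹ * Real.exp (-t ^ 2 / 2)

/-- The standard normal density `φ(x) = (2π)^{−1/2} e^{−x²/2}`. -/
noncomputable def phi (x : ℝ) : ℝ :=
  (Real.sqrt (2 * Real.pi))⁻¹ * Real.exp (-x ^ 2 / 2)

/-- The partial derivative `∂ log π(x) / ∂xᵢ`. -/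
noncomputable def pdLog {d : ℕ} (π : (Fin d → ℝ) → ℝ) (i : Fin d) (x : Fin d → ℝ) : ℝ :=
  fderiv ℝ (fun y => Real.log (π y)) x (Pi.single i 1)

/-- The roughness `I_d(x) = (1/d)·Σᵢ (∂ log π(x)/∂xᵢ)²`. -/
noncomputable def rough {d : ℕ} (π : (Fin d → ℝ) → ℝ) (x : Fin d → ℝ) : ℝ :=
  (1 / (d : ℝ)) * ∑ i, (pdLog π i x) ^ 2

/-- `h(ℓ) = 2ℓ²·E_{X∼π}[Φ(−ℓ·√(I_d(X))/2)]`. -/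
noncomputable def hfun {d : ℕ} (π : (Fin d → ℝ) → ℝ) (ℓ : ℝ) : ℝ :=
  2 * ℓ ^ 2 * ∫ x : Fin d → ℝ, Phi (-(ℓ * Real.sqrt (rough π x)) / 2) * π x

/-- The asymptotic acceptance rate `a(ℓ) = 2·E_{X∼π}[Φ(−ℓ·√(I_d(X))/2)]`. -/
noncomputable def afun {d : ℕ} (π : (Fin d → ℝ) → ℝ) (ℓ : ℝ) : ℝ :=
  2 * ∫ x : Fin d → ℝ, Phi (-(ℓ * Real.sqrt (rough π x)) / 2) * π x

open Set Filter

lemma sqrt2pi_pos : 0 < Real.sqrt (2*Real.pi) := Real.sqrt_pos.mpr (by positivity)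

lemma phi_pos (x : ℝ) : 0 < phi x := by
  unfold phi; positivity

lemma phi_cont : Continuous phi := by
  unfold phi; continuity

lemma phi_even (x : ℝ) : phi (-x) = phi x := by unfold phi; ring_nf

lemma phi_le (x : ℝ) : phi x ≤ (Real.sqrt (2*Real.pi))⁻¹ := by
  unfold phi
  have : Real.exp (-x^2/2) ≤ 1 := by
    rw [Real.exp_le_one_iff]; nlinarith [sq_nonneg x]
  nlinarith [Real.sqrt_nonneg (2*Real.pi), inv_nonneg.mpr (Real.sqrt_nonneg (2*Real.pi))]

lemma exp_neg_sq_eq (t : ℝ) : Real.exp (-t^2/2) = Real.exp (-(1/2 : ℝ) * t^2) := by ring_nf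

lemma integrable_phi : Integrable phi := by
  have h : Integrable (fun t : ℝ => Real.exp (-(1/2:ℝ) * t^2)) := integrable_exp_neg_mul_sq (by norm_num)
  have := h.const_mul (Real.sqrt (2*Real.pi))⁻¹
  refine this.congr (Filter.Eventually.of_forall fun t => ?_)
  unfold phi; rw [exp_neg_sq_eq]

lemma integral_phi : ∫ x, phi x = 1 := by
  unfold phi
  simp_rw [exp_neg_sq_eq]
  rw [integral_const_mul, integral_gaussian]
  rw [show Real.pi / (1/2:ℝ) = 2 * Real.pi by ring]
  field_simp

lemma hasDerivAt_phi (x : ℝ) : HasDerivAt phi (-x * phi x) x := by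
  unfold phi
  have h1 : HasDerivAt (fun t : ℝ => -t^2/2) (-x) x := by
    have := ((hasDerivAt_pow 2 x).neg).div_const 2
    simpa using this.congr_deriv (by ring)
  have := (h1.exp).const_mul (Real.sqrt (2*Real.pi))⁻¹
  refine this.congr_deriv ?_
  ring

lemma Phi_eq_add (x : ℝ) : Phi x = Phi 0 + ∫ t in (0:ℝ)..x, phi t := by
  have : Phi x - Phi 0 = ∫ t in (0:ℝ)..x, phi t := by
    unfold Phi
    rw [← intervalIntegral.integral_Iic_sub_Iic (integrable_phi.integrableOn) (integrable_phi.integrableOn)]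
    rfl
  linarith

lemma Phi_eq' (x : ℝ) : Phi x = ∫ t in Set.Iic x, phi t := rfl

lemma hasDerivAt_Phi (x : ℝ) : HasDerivAt Phi (phi x) x := by
  have h : HasDerivAt (fun u => Phi 0 + ∫ t in (0:ℝ)..u, phi t) (phi x) x := by
    apply HasDerivAt.const_add
    exact intervalIntegral.integral_hasDerivAt_right
      (phi_cont.intervalIntegrable 0 x)
      (phi_cont.stronglyMeasurable.stronglyMeasurableAtFilter)
      phi_cont.continuousAt
  exact h.congr_of_eventuallyEq (Filter.Eventually.of_forall fun u => Phi_eq_add u)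

lemma Phi_add_neg (x : ℝ) : Phi x + Phi (-x) = 1 := by
  have h1 : Phi (-x) = ∫ t in Set.Ioi x, phi t := by
    unfold Phi
    rw [← integral_comp_neg_Ioi]
    simp_rw [show ∀ t : ℝ, (Real.sqrt (2 * Real.pi))⁻¹ * Real.exp (-(-t) ^ 2 / 2) = phi t by
      intro t; unfold phi; ring_nf]
  have h2 : Phi x = ∫ t in Set.Iic x, phi t := rfl
  rw [h2, h1, intervalIntegral.integral_Iic_add_Ioi integrable_phi.integrableOn integrable_phi.integrableOn, integral_phi]

lemma Phi_zero : Phi 0 = 1/2 := by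
  have := Phi_add_neg 0
  simp at this; linarith

lemma Phi_nonneg (x : ℝ) : 0 ≤ Phi x := by
  unfold Phi
  positivity

lemma Phi_le_one (x : ℝ) : Phi x ≤ 1 := by
  have := Phi_add_neg x
  have := Phi_nonneg (-x)
  linarith

lemma integral_Iic_neg_mul_phi (c : ℝ) : ∫ t in Set.Iic c, -t * phi t = phi c := by
  have hint : IntegrableOn (fun t : ℝ => -t * phi t) (Set.Iic c) := by
    have h : Integrable (fun t : ℝ => -t * phi t) := by
      have h2 := (integrable_mul_exp_neg_mul_sq (b := (1/2:ℝ)) (by norm_num)).const_mul ((Real.sqrt (2*Real.pi))⁻¹ * (-1))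
      refine h2.congr (Filter.Eventually.of_forall fun t => ?_)
      show _ = -t * phi t
      unfold phi
      rw [show Real.exp (-t^2/2) = Real.exp (-(1/2:ℝ)*t^2) by ring_nf]
      ring
    exact h.integrableOn
  have := integral_Iic_of_hasDerivAt_of_tendsto' (f := phi) (f' := fun t => -t * phi t)
    (a := c) (m := 0) (fun t _ => hasDerivAt_phi t) hint ?_
  · rw [this, sub_zero]
  · have h1 : Tendsto (fun t : ℝ => -t^2/2) atBot atBot := by
      refine tendsto_atBot_mono' atBot ?_ ((tendsto_id (α := ℝ)).atBot_div_const (by norm_num : (0:ℝ) < 2))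
      filter_upwards [Filter.eventually_le_atBot (-1 : ℝ)] with t ht
      show -t^2/2 ≤ t/2
      nlinarith
    have h2 := (Real.tendsto_exp_atBot.comp h1).const_mul (Real.sqrt (2*Real.pi))⁻¹
    rw [mul_zero] at h2
    exact h2.congr fun t => rfl

lemma integrableOn_neg_mul_phi (c : ℝ) : IntegrableOn (fun t : ℝ => -t * phi t) (Set.Iic c) := by
  have h2 := (integrable_mul_exp_neg_mul_sq (b := (1/2:ℝ)) (by norm_num)).const_mul ((Real.sqrt (2*Real.pi))⁻¹ * (-1))
  refine (h2.congr (Filter.Eventually.of_forall fun t => ?_)).integrableOn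
  show _ = -t * phi t
  unfold phi
  rw [show Real.exp (-t^2/2) = Real.exp (-(1/2:ℝ)*t^2) by ring_nf]
  ring

lemma mills {a : ℝ} (ha : 0 < a) : Phi (-a) ≤ phi a / a := by
  have key : Phi (-a) ≤ ∫ t in Set.Iic (-a), (-t/a) * phi t := by
    rw [Phi_eq']
    apply setIntegral_mono_on integrable_phi.integrableOn
    · have := (integrableOn_neg_mul_phi (-a)).smul (a⁻¹)
      refine this.congr (Filter.Eventually.of_forall fun t => ?_)
      simp; ring
    · exact measurableSet_Iic
    · intro t ht
      have h1 : 1 ≤ -t/a := by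
        rw [le_div_iff₀ ha]
        simp at ht; linarith
      nlinarith [phi_pos t]
  calc Phi (-a) ≤ ∫ t in Set.Iic (-a), (-t/a) * phi t := key
    _ = a⁻¹ * ∫ t in Set.Iic (-a), -t * phi t := by
        rw [← integral_const_mul]
        congr 1; funext t; ring
    _ = phi a / a := by rw [integral_Iic_neg_mul_phi, phi_even]; ring

lemma hasDerivAt_id_mul_phi (u : ℝ) : HasDerivAt (fun u => u * phi u) ((1-u^2)*phi u) u := by
  have := (hasDerivAt_id u).mul (hasDerivAt_phi u)
  refine this.congr_deriv ?_
  simp; ring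

lemma id_mul_phi_anti : AntitoneOn (fun u : ℝ => u * phi u) (Set.Ici 1) := by
  apply antitoneOn_of_deriv_nonpos (convex_Ici 1)
  · exact (continuous_id.mul phi_cont).continuousOn
  · intro u hu
    exact (hasDerivAt_id_mul_phi u).differentiableAt.differentiableWithinAt
  · intro u hu
    rw [interior_Ici] at hu
    rw [(hasDerivAt_id_mul_phi u).deriv]
    have h1 : (1:ℝ) < u := hu
    have := mul_pos (phi_pos u) (by nlinarith : (0:ℝ) < u^2 - 1)
    nlinarith

noncomputable def psi (u : ℝ) : ℝ := 2 * Phi (-u) - u * phi u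

lemma hasDerivAt_psi (u : ℝ) : HasDerivAt psi ((u^2-3)*phi u) u := by
  have h1 : HasDerivAt (fun u : ℝ => Phi (-u)) (-phi u) u := by
    have := (hasDerivAt_Phi (-u)).comp u (hasDerivAt_neg u)
    refine this.congr_deriv ?_
    rw [phi_even]; ring
  have := (h1.const_mul 2).sub (hasDerivAt_id_mul_phi u)
  refine this.congr_deriv ?_
  ring

lemma psi_strictAnti : StrictAntiOn psi (Set.Icc 0 (Real.sqrt 3)) := by
  apply strictAntiOn_of_deriv_neg (convex_Icc _ _)
  · exact fun u _ => (hasDerivAt_psi u).differentiableAt.continuousAt.continuousWithinAt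
  · intro u hu
    rw [interior_Icc] at hu
    rw [(hasDerivAt_psi u).deriv]
    have h3 : u^2 < 3 := by
      have := hu.2
      nlinarith [Real.sq_sqrt (by norm_num : (3:ℝ) ≥ 0), hu.1, Real.sqrt_nonneg 3]
    nlinarith [phi_pos u]

-- the key pointwise inequality
lemma key_pointwise {m : ℝ} (hm : 0 < m) (hm2 : m^2 ≤ 2)
    (hmeq : 2 * Phi (-m) = m * phi m) {u : ℝ} (hu : 0 ≤ u) :
    2 * Phi (-u) ≤ m * phi m + (2/(3-m^2)) * (2 * Phi (-u) - u * phi u) := by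
  set lam : ℝ := 2/(3-m^2) with hlam
  have h3m : 0 < 3 - m^2 := by nlinarith
  have hlam_pos : 0 < lam := by positivity
  set G : ℝ → ℝ := fun u => (1-lam) * (2 * Phi (-u)) + lam * (u * phi u) with hG
  have hderiv : ∀ u : ℝ, HasDerivAt G (lam * phi u * (m^2 - u^2)) u := by
    intro u
    have h1 : HasDerivAt (fun u : ℝ => Phi (-u)) (-phi u) u := by
      have := (hasDerivAt_Phi (-u)).comp u (hasDerivAt_neg u)
      refine this.congr_deriv ?_
      rw [phi_even]; ring
    have := ((h1.const_mul 2).const_mul (1-lam)).add ((hasDerivAt_id_mul_phi u).const_mul lam)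
    refine this.congr_deriv ?_
    have h2 : lam * (3 - m^2) = 2 := by
      rw [hlam]; field_simp
    linear_combination (2 * phi u) * (mul_inv_cancel₀ h3m.ne' : (3 - m^2) * (3 - m^2)⁻¹ = 1)
  have hGm : G m = m * phi m := by
    rw [hG]; simp only []
    rw [hmeq]; ring
  have hGle : ∀ v : ℝ, 0 ≤ v → G v ≤ G m := by
    intro v hv
    rcases le_total v m with h | h
    · -- monotone on [0, m]
      have mono : MonotoneOn G (Set.Icc 0 m) := by
        apply monotoneOn_of_deriv_nonneg (convex_Icc _ _)
        · exact fun u _ => (hderiv u).differentiableAt.continuousAt.continuousWithinAt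
        · exact fun u _ => (hderiv u).differentiableAt.differentiableWithinAt
        · intro u hu
          rw [interior_Icc] at hu
          rw [(hderiv u).deriv]
          have : u^2 < m^2 := by nlinarith [hu.1, hu.2]
          have := mul_pos (mul_pos hlam_pos (phi_pos u)) (by linarith : (0:ℝ) < m^2 - u^2)
          linarith
      exact mono ⟨hv, h⟩ ⟨le_of_lt hm, le_refl m⟩ h
    · -- antitone on [m, ∞)
      have anti : AntitoneOn G (Set.Ici m) := by
        apply antitoneOn_of_deriv_nonpos (convex_Ici _)
        · exact fun u _ => (hderiv u).differentiableAt.continuousAt.continuousWithinAt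
        · exact fun u _ => (hderiv u).differentiableAt.differentiableWithinAt
        · intro u hu
          rw [interior_Ici] at hu
          rw [(hderiv u).deriv]
          have : m^2 < u^2 := by nlinarith [hm, Set.mem_Ioi.mp hu]
          have := mul_pos (mul_pos hlam_pos (phi_pos u)) (by linarith : (0:ℝ) < u^2 - m^2)
          nlinarith
      exact anti (Set.self_mem_Ici) h h
  have := hGle u hu
  rw [hGm] at this
  rw [hG] at this
  simp only [] at this
  linarith

lemma exp_upper {x : ℝ} (h0 : 0 ≤ x) (h1 : x ≤ 1) :
    Real.exp (-x) ≤ 1 - x + x^2/2 - x^3/6 + x^4/24 - x^5/120 + x^6 * (7/4320) := by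
  have hb := Real.exp_bound (x := -x) (by rw [abs_neg, abs_of_nonneg h0]; exact h1) (n := 6) (by norm_num)
  have hsum : ∑ i ∈ Finset.range 6, (-x)^i / (Nat.factorial i : ℝ)
      = 1 - x + x^2/2 - x^3/6 + x^4/24 - x^5/120 := by
    simp [Finset.sum_range_succ, Nat.factorial]
    ring
  rw [hsum, abs_neg, abs_of_nonneg h0] at hb
  have h2 := (abs_le.mp hb).2
  norm_num [Nat.factorial] at h2
  linarith

lemma poly_antideriv (t : ℝ) :
    HasDerivAt (fun t : ℝ => t - t^3/6 + t^5/40 - t^7/336 + t^9/3456 - t^11/42240 + 7*t^13/3594240)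
      (1 - t^2/2 + t^4/8 - t^6/48 + t^8/384 - t^10/3840 + t^12*(7/276480)) t := by
  have h := (((((((hasDerivAt_id t).sub ((hasDerivAt_pow 3 t).div_const 6)).add
      ((hasDerivAt_pow 5 t).div_const 40)).sub ((hasDerivAt_pow 7 t).div_const 336)).add
      ((hasDerivAt_pow 9 t).div_const 3456)).sub ((hasDerivAt_pow 11 t).div_const 42240)).add
      (((hasDerivAt_pow 13 t).const_mul 7).div_const 3594240))
  refine h.congr_deriv ?_
  norm_num
  ring

lemma integral_exp_upper :
    ∫ t in (0:ℝ)..(237/200:ℝ), Real.exp (-t^2/2) ≤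
      (237/200:ℝ) - (237/200:ℝ)^3/6 + (237/200:ℝ)^5/40 - (237/200:ℝ)^7/336
        + (237/200:ℝ)^9/3456 - (237/200:ℝ)^11/42240 + 7*(237/200:ℝ)^13/3594240 := by
  have hle : ∫ t in (0:ℝ)..(237/200:ℝ), Real.exp (-t^2/2) ≤
      ∫ t in (0:ℝ)..(237/200:ℝ), (1 - (t^2/2) + (t^2/2)^2/2 - (t^2/2)^3/6 + (t^2/2)^4/24 - (t^2/2)^5/120 + (t^2/2)^6 * (7/4320)) := by
    apply intervalIntegral.integral_mono_on (by norm_num)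
    · apply Continuous.intervalIntegrable; fun_prop
    · apply Continuous.intervalIntegrable; fun_prop
    · intro t ht
      rw [Set.mem_Icc] at ht
      have h0 : 0 ≤ t^2/2 := by positivity
      have h1 : t^2/2 ≤ 1 := by nlinarith [ht.1, ht.2]
      have := exp_upper h0 h1
      calc Real.exp (-t^2/2) = Real.exp (-(t^2/2)) := by ring_nf
        _ ≤ _ := this
  refine hle.trans (le_of_eq ?_)
  have heq : ∀ t : ℝ, (1 - (t^2/2) + (t^2/2)^2/2 - (t^2/2)^3/6 + (t^2/2)^4/24 - (t^2/2)^5/120 + (t^2/2)^6 * (7/4320))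
      = (1 - t^2/2 + t^4/8 - t^6/48 + t^8/384 - t^10/3840 + t^12*(7/276480)) := by
    intro t; ring
  simp_rw [heq]
  rw [intervalIntegral.integral_eq_sub_of_hasDerivAt (fun t _ => poly_antideriv t)
    (by apply Continuous.intervalIntegrable; fun_prop)]
  norm_num

lemma exp_bsq_upper : Real.exp (-(237/200:ℝ)^2/2) ≤
    1 - ((237/200:ℝ)^2/2) + ((237/200:ℝ)^2/2)^2/2 - ((237/200:ℝ)^2/2)^3/6 + ((237/200:ℝ)^2/2)^4/24
      - ((237/200:ℝ)^2/2)^5/120 + ((237/200:ℝ)^2/2)^6 * (7/4320) := by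
  have h0 : (0:ℝ) ≤ (237/200:ℝ)^2/2 := by positivity
  have h1 : (237/200:ℝ)^2/2 ≤ 1 := by norm_num
  have := exp_upper h0 h1
  calc Real.exp (-(237/200:ℝ)^2/2) = Real.exp (-((237/200:ℝ)^2/2)) := by ring_nf
    _ ≤ _ := this

lemma sqrt2pi_lb : (2.50662:ℝ) ≤ Real.sqrt (2*Real.pi) := by
  rw [show (2.50662:ℝ) = Real.sqrt (2.50662^2) by rw [Real.sqrt_sq (by norm_num)]]
  exact Real.sqrt_le_sqrt (by nlinarith [Real.pi_gt_d6])

-- key numeric: 2 * Phi (-b) > b * phi b for b = 1.185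
lemma psi_b_pos : (237/200:ℝ) * phi (237/200) < 2 * Phi (-(237/200)) := by
  have hs := sqrt2pi_pos
  set s := Real.sqrt (2*Real.pi) with hsdef
  have hPhib : Phi (-(237/200:ℝ)) = 1 - (1/2 + s⁻¹ * ∫ t in (0:ℝ)..(237/200:ℝ), Real.exp (-t^2/2)) := by
    have h1 : Phi (237/200:ℝ) = 1/2 + s⁻¹ * ∫ t in (0:ℝ)..(237/200:ℝ), Real.exp (-t^2/2) := by
      rw [Phi_eq_add (237/200:ℝ), Phi_zero]
      congr 1
      rw [← intervalIntegral.integral_const_mul]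
      rfl
    have := Phi_add_neg (237/200:ℝ)
    linarith
  have hphib : phi (237/200:ℝ) = s⁻¹ * Real.exp (-(237/200:ℝ)^2/2) := rfl
  set I := ∫ t in (0:ℝ)..(237/200:ℝ), Real.exp (-t^2/2) with hI
  set E := Real.exp (-(237/200:ℝ)^2/2) with hE
  rw [hPhib, hphib]
  have hQ := integral_exp_upper
  have hEq := exp_bsq_upper
  rw [← hI] at hQ
  rw [← hE] at hEq
  have hEpos : 0 < E := Real.exp_pos _
  have key : 2 * I + (237/200:ℝ) * E < s := by
    apply lt_of_le_of_lt (b := (2.5066:ℝ))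
    · have hbEq := mul_le_mul_of_nonneg_left hEq (by norm_num : (0:ℝ) ≤ 237/200)
      have hnum : 2*((237/200:ℝ) - (237/200:ℝ)^3/6 + (237/200:ℝ)^5/40 - (237/200:ℝ)^7/336
        + (237/200:ℝ)^9/3456 - (237/200:ℝ)^11/42240 + 7*(237/200:ℝ)^13/3594240)
        + (237/200:ℝ) * (1 - ((237/200:ℝ)^2/2) + ((237/200:ℝ)^2/2)^2/2 - ((237/200:ℝ)^2/2)^3/6
          + ((237/200:ℝ)^2/2)^4/24 - ((237/200:ℝ)^2/2)^5/120 + ((237/200:ℝ)^2/2)^6 * (7/4320)) ≤ 2.5066 := by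
        norm_num
      linarith
    · exact lt_of_lt_of_le (by norm_num) sqrt2pi_lb
  have h2 : s * (2 * (1 - (1/2 + s⁻¹ * I)) - (237/200:ℝ) * (s⁻¹ * E)) = s - (2*I + (237/200:ℝ)*E) := by
    field_simp
    ring
  nlinarith [mul_pos hs (by linarith : (0:ℝ) < s - (2*I + (237/200:ℝ)*E))]

lemma b_phi_b_le : (237/200:ℝ) * phi (237/200) ≤ 0.2345 := by
  have hs := sqrt2pi_pos
  set s := Real.sqrt (2*Real.pi) with hsdef
  have hEq := exp_bsq_upper
  have hslb := sqrt2pi_lb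
  have hphib : phi (237/200:ℝ) = s⁻¹ * Real.exp (-(237/200:ℝ)^2/2) := rfl
  rw [hphib]
  have hbE : (237/200:ℝ) * Real.exp (-(237/200:ℝ)^2/2) ≤ 0.2345 * 2.50662 := by
    have hbEq := mul_le_mul_of_nonneg_left hEq (by norm_num : (0:ℝ) ≤ 237/200)
    have hnum : (237/200:ℝ) * (1 - ((237/200:ℝ)^2/2) + ((237/200:ℝ)^2/2)^2/2 - ((237/200:ℝ)^2/2)^3/6
          + ((237/200:ℝ)^2/2)^4/24 - ((237/200:ℝ)^2/2)^5/120 + ((237/200:ℝ)^2/2)^6 * (7/4320)) ≤ 0.2345 * 2.50662 := by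
      norm_num
    linarith
  have hinv : s⁻¹ ≤ (2.50662:ℝ)⁻¹ := by
    apply inv_anti₀ (by norm_num) hslb
  calc (237/200:ℝ) * (s⁻¹ * Real.exp (-(237/200:ℝ)^2/2))
      = ((237/200:ℝ) * Real.exp (-(237/200:ℝ)^2/2)) * s⁻¹ := by ring
    _ ≤ (0.2345 * 2.50662) * (2.50662:ℝ)⁻¹ := by
        apply mul_le_mul hbE hinv (inv_nonneg.mpr hs.le) (by norm_num)
    _ = 0.2345 := by norm_num

lemma Phi_cont : Continuous Phi :=
  continuous_iff_continuousAt.mpr fun x => (hasDerivAt_Phi x).continuousAt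

lemma id_mul_phi_le {u : ℝ} (hu : 0 ≤ u) : u * phi u ≤ (Real.sqrt (2*Real.pi))⁻¹ := by
  have h1 : u * Real.exp (-u^2/2) ≤ 1 := by
    rw [show (-u^2/2 : ℝ) = -(u^2/2) by ring, Real.exp_neg]
    rw [mul_inv_le_iff₀ (Real.exp_pos _), one_mul]
    calc u ≤ u^2/2 + 1 := by nlinarith
      _ ≤ Real.exp (u^2/2) := by have := Real.add_one_le_exp (u^2/2); linarith
  have : u * phi u = (Real.sqrt (2*Real.pi))⁻¹ * (u * Real.exp (-u^2/2)) := by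
    unfold phi; ring
  rw [this]
  nlinarith [inv_nonneg.mpr sqrt2pi_pos.le]

-- main analytic lemma
theorem main_analytic (d : ℕ)
    (p : (Fin d → ℝ) → ℝ) (hppos : ∀ x, 0 < p x) (hpC1 : ContDiff ℝ 1 p)
    (hdens : ∫ x : Fin d → ℝ, p x = 1)
    (m : ℝ) (hm : 0 < m) (hm2 : m^2 ≤ 2) (hmeq : 2 * Phi (-m) = m * phi m)
    (lhat : ℝ) (hlhat : 0 < lhat)
    (hmax : ∀ ℓ : ℝ, 0 < ℓ → hfun p ℓ ≤ hfun p lhat) :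
    afun p lhat ≤ m * phi m := by
  classical
  set R : (Fin d → ℝ) → ℝ := fun x => Real.sqrt (rough p x) with hR
  have hRmeas : Measurable R := by
    apply Measurable.sqrt
    unfold rough
    apply Measurable.const_mul
    apply Finset.measurable_sum
    intro i _
    exact ((measurable_fderiv_apply_const ℝ (fun y => Real.log (p y)) (Pi.single i 1))).pow_const 2
  have hRnn : ∀ x, 0 ≤ R x := fun x => Real.sqrt_nonneg _
  have hpcont : Continuous p := hpC1.continuous
  have hpint : Integrable p := by
    by_contra h
    rw [integral_undef h] at hdens
    norm_num at hdens
  -- F and F'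
  set F : ℝ → (Fin d → ℝ) → ℝ := fun ℓ x => Phi (-(ℓ * R x) / 2) * p x with hF
  set F' : ℝ → (Fin d → ℝ) → ℝ := fun ℓ x => -(R x / 2) * phi (ℓ * R x / 2) * p x with hF'
  have hFmeas : ∀ ℓ : ℝ, AEStronglyMeasurable (F ℓ) volume := by
    intro ℓ
    apply Measurable.aestronglyMeasurable
    have h1 : Measurable fun x => -(ℓ * R x)/2 := ((hRmeas.const_mul ℓ).neg).div_const 2
    exact (Phi_cont.measurable.comp h1).mul hpcont.measurable
  have hF'meas : AEStronglyMeasurable (F' lhat) volume := by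
    apply Measurable.aestronglyMeasurable
    have h1 : Measurable fun x => lhat * R x / 2 := (hRmeas.const_mul lhat).div_const 2
    exact (((hRmeas.div_const 2).neg).mul (phi_cont.measurable.comp h1)).mul hpcont.measurable
  have hFint : Integrable (F lhat) := by
    apply hpint.mono' (hFmeas lhat)
    filter_upwards with x
    rw [hF]
    simp only [Real.norm_eq_abs, abs_mul, abs_of_nonneg (Phi_nonneg _), abs_of_pos (hppos x)]
    nlinarith [Phi_le_one (-(lhat * R x)/2), Phi_nonneg (-(lhat * R x)/2), hppos x]
  set bound : (Fin d → ℝ) → ℝ := fun x => (2/lhat) * (Real.sqrt (2*Real.pi))⁻¹ * p x with hbound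
  have hbound_int : Integrable bound := (hpint.const_mul _)
  have hderiv_bound : ∀ x, ∀ ℓ ∈ Metric.ball lhat (lhat/2), ‖F' ℓ x‖ ≤ bound x := by
    intro x ℓ hℓ
    have hℓpos : lhat/2 < ℓ := by
      rw [Metric.mem_ball, Real.dist_eq, abs_lt] at hℓ
      linarith [hℓ.1]
    have hℓ0 : 0 < ℓ := by linarith
    have hu : 0 ≤ ℓ * R x / 2 := by positivity
    have hkey : R x / 2 * phi (ℓ * R x / 2) ≤ (2/lhat) * (Real.sqrt (2*Real.pi))⁻¹ := by
      have h1 : R x / 2 * phi (ℓ * R x / 2) = (1/ℓ) * ((ℓ * R x / 2) * phi (ℓ * R x / 2)) := by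
        field_simp
      rw [h1]
      have h2 := id_mul_phi_le hu
      have h3 : (1/ℓ) ≤ 2/lhat := by
        rw [div_le_div_iff₀ hℓ0 hlhat]
        linarith
      have h4 : 0 ≤ (ℓ * R x / 2) * phi (ℓ * R x / 2) := by
        have := phi_pos (ℓ * R x / 2); nlinarith
      calc (1/ℓ) * ((ℓ * R x / 2) * phi (ℓ * R x / 2))
          ≤ (2/lhat) * ((ℓ * R x / 2) * phi (ℓ * R x / 2)) := by
            apply mul_le_mul_of_nonneg_right h3 h4
        _ ≤ (2/lhat) * (Real.sqrt (2*Real.pi))⁻¹ := by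
            apply mul_le_mul_of_nonneg_left h2 (by positivity)
    rw [hF', hbound]
    simp only [Real.norm_eq_abs, abs_mul, abs_neg, abs_of_nonneg (div_nonneg (hRnn x) (by norm_num : (0:ℝ) ≤ 2)), abs_of_pos (phi_pos _), abs_of_pos (hppos x)]
    have := hppos x
    nlinarith [hkey]
  have hderiv : ∀ x, ∀ ℓ ∈ Metric.ball lhat (lhat/2), HasDerivAt (fun ℓ => F ℓ x) (F' ℓ x) ℓ := by
    intro x ℓ _
    have hinner : HasDerivAt (fun ℓ : ℝ => -(ℓ * R x)/2) (-(R x)/2) ℓ := by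
      have := ((hasDerivAt_id ℓ).mul_const (R x)).neg.div_const 2
      simpa using this
    have hcomp := (hasDerivAt_Phi (-(ℓ * R x)/2)).comp ℓ hinner
    have := hcomp.mul_const (p x)
    have heven : phi (-(ℓ * R x)/2) = phi (ℓ * R x / 2) := by
      rw [show (-(ℓ * R x)/2 : ℝ) = -((ℓ * R x)/2) by ring, phi_even]
    refine this.congr_deriv ?_
    simp only [hF', heven]
    ring
  -- differentiate under the integral
  have main := hasDerivAt_integral_of_dominated_loc_of_deriv_le (μ := volume)
    (Metric.ball_mem_nhds lhat (half_pos hlhat)) (Filter.Eventually.of_forall hFmeas) hFint hF'meas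
    (Filter.Eventually.of_forall hderiv_bound) hbound_int
    (Filter.Eventually.of_forall hderiv)
  obtain ⟨hF'int, hA⟩ := main
  set A : ℝ → ℝ := fun ℓ => ∫ x, F ℓ x with hAdef
  set D : ℝ := ∫ x, F' lhat x with hD
  -- hfun p ℓ = 2 ℓ^2 * A ℓ
  have hfun_eq : ∀ ℓ, hfun p ℓ = 2 * ℓ^2 * A ℓ := fun ℓ => rfl
  have hafun_eq : afun p lhat = 2 * A lhat := rfl
  -- derivative of hfun at lhat is 0
  have hhderiv : HasDerivAt (hfun p) (2 * (2*lhat) * A lhat + 2 * lhat^2 * D) lhat := by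
    have h1 : HasDerivAt (fun ℓ : ℝ => 2 * ℓ^2) (2 * (2*lhat)) lhat := by
      have := (hasDerivAt_pow 2 lhat).const_mul (2:ℝ)
      simpa using this
    have := h1.mul hA
    have heq : hfun p = fun ℓ => (2 * ℓ^2) * A ℓ := by
      funext ℓ; rw [hfun_eq]
    rw [heq]
    exact this
  have hlocmax : IsLocalMax (hfun p) lhat := by
    have hmem : Set.Ioi (0:ℝ) ∈ nhds lhat := isOpen_Ioi.mem_nhds hlhat
    filter_upwards [hmem] with ℓ hℓ
    exact hmax ℓ hℓ
  have hderiv0 : 2 * (2*lhat) * A lhat + 2 * lhat^2 * D = 0 := hlocmax.hasDerivAt_eq_zero hhderiv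
  -- first order condition: 2 * A lhat = - lhat * D
  have hfoc : 2 * A lhat = - lhat * D := by
    have hl2 : lhat ≠ 0 := ne_of_gt hlhat
    field_simp at hderiv0 ⊢
    nlinarith [hderiv0]
  -- identify - lhat * D as ∫ U phi U p
  set U : (Fin d → ℝ) → ℝ := fun x => lhat * R x / 2 with hU
  have hDeq : - lhat * D = ∫ x, U x * phi (U x) * p x := by
    rw [hD, ← integral_const_mul]
    congr 1
    funext x
    simp only [hF', hU]
    field_simp
  -- integrability of the pieces
  have hint1 : Integrable (fun x => 2 * Phi (-(U x)) * p x) := by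
    have : (fun x => 2 * Phi (-(U x)) * p x) = fun x => 2 * F lhat x := by
      funext x
      simp only [hF, hU]
      rw [show -(lhat * R x)/2 = -(lhat * R x / 2) by ring]
      ring
    rw [this]
    exact hFint.const_mul 2
  have hint2 : Integrable (fun x => U x * phi (U x) * p x) := by
    have : (fun x => U x * phi (U x) * p x) = fun x => (-lhat) * F' lhat x := by
      funext x
      simp only [hF', hU]
      field_simp
    rw [this]
    exact hF'int.const_mul _
  -- pointwise inequality integrated
  set lam : ℝ := 2/(3-m^2) with hlam
  have hptwise : ∀ x, 2 * Phi (-(U x)) * p x ≤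
      (m * phi m) * p x + lam * (2 * Phi (-(U x)) * p x - U x * phi (U x) * p x) := by
    intro x
    have hUnn : 0 ≤ U x := by rw [hU]; positivity
    have := key_pointwise hm hm2 hmeq hUnn
    have hpx := (hppos x).le
    nlinarith [this, hppos x]
  have hint3 : Integrable (fun x => lam * (2 * Phi (-(U x)) * p x - U x * phi (U x) * p x)) := by
    have := (hint1.sub hint2).const_mul lam
    simpa using this
  have hint4 : Integrable (fun x => (m * phi m) * p x) := hpint.const_mul _
  have hRHSint : Integrable (fun x => (m * phi m) * p x + lam * (2 * Phi (-(U x)) * p x - U x * phi (U x) * p x)) := by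
    have := hint4.add hint3
    exact this
  have hineq : ∫ x, 2 * Phi (-(U x)) * p x ≤
      ∫ x, ((m * phi m) * p x + lam * (2 * Phi (-(U x)) * p x - U x * phi (U x) * p x)) :=
    integral_mono hint1 hRHSint hptwise
  have hRHSval : ∫ x, ((m * phi m) * p x + lam * (2 * Phi (-(U x)) * p x - U x * phi (U x) * p x))
      = m * phi m := by
    rw [integral_add hint4 hint3]
    rw [integral_const_mul, hdens, integral_const_mul, integral_sub hint1 hint2]
    have h2A : ∫ x, 2 * Phi (-(U x)) * p x = 2 * A lhat := by
      rw [hAdef, ← integral_const_mul]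
      congr 1
      funext x
      simp only [hF, hU]
      rw [show -(lhat * R x)/2 = -(lhat * R x / 2) by ring]
      ring
    rw [h2A, ← hDeq, hfoc]
    ring
  have h2A : ∫ x, 2 * Phi (-(U x)) * p x = 2 * A lhat := by
    rw [hAdef, ← integral_const_mul]
    congr 1
    funext x
    simp only [hF, hU]
    rw [show -(lhat * R x)/2 = -(lhat * R x / 2) by ring]
    ring
  rw [hafun_eq, ← h2A]
  rw [hRHSval] at hineq
  exact hineq

/-- Let `π` be a positive `C¹` probability density on `ℝ^d` (`d ≥ 1`).
If `ℓ̂ > 0` maximizes `h(ℓ) = 2ℓ²·E[Φ(−ℓ√(I_d(X))/2)]` over `(0,∞)`, then the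
asymptotic acceptance rate satisfies `a(ℓ̂) ≤ 2Φ(−m̂)`, where `m̂` is the unique positive
real with `2Φ(−m̂) = m̂·φ(m̂)`; in particular `a(ℓ̂) ≤ 0.2345`. -/
theorem acceptance_rate_le_of_maximizer (d : ℕ) (hd : 1 ≤ d)
    (π : (Fin d → ℝ) → ℝ) (hπpos : ∀ x, 0 < π x) (hπC1 : ContDiff ℝ 1 π)
    (hdens : ∫ x : Fin d → ℝ, π x = 1)
    (m : ℝ) (hm : 0 < m) (hmeq : 2 * Phi (-m) = m * phi m)
    (hmuniq : ∀ m' : ℝ, 0 < m' → 2 * Phi (-m') = m' * phi m' → m' = m)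
    (lhat : ℝ) (hlhat : 0 < lhat)
    (hmax : ∀ ℓ : ℝ, 0 < ℓ → hfun π ℓ ≤ hfun π lhat) :
    afun π lhat ≤ 2 * Phi (-m) ∧ afun π lhat ≤ 0.2345 := by
  -- m^2 ≤ 2 via Mills' ratio
  have hm2 : m^2 ≤ 2 := by
    have hmills := mills hm
    have hphp := phi_pos m
    have h1 : m * phi m ≤ 2 * (phi m / m) := by rw [← hmeq]; linarith
    have h2 : m * (m * phi m) ≤ m * (2 * (phi m / m)) := by
      apply mul_le_mul_of_nonneg_left h1 hm.le
    rw [show m * (2 * (phi m / m)) = 2 * phi m * (m / m) by ring, div_self (ne_of_gt hm)] at h2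
    nlinarith
  have hmain := main_analytic d π hπpos hπC1 hdens m hm hm2 hmeq lhat hlhat hmax
  constructor
  · rw [hmeq]; exact hmain
  · -- 237/200 ≤ m
    have hb_le_m : (237/200 : ℝ) ≤ m := by
      by_contra hcon
      push_neg at hcon
      have hm3 : m ∈ Set.Icc (0:ℝ) (Real.sqrt 3) := by
        constructor
        · exact hm.le
        · rw [Real.le_sqrt hm.le (by norm_num)]
          linarith
      have hb3 : (237/200 : ℝ) ∈ Set.Icc (0:ℝ) (Real.sqrt 3) := by
        constructor
        · norm_num
        · rw [Real.le_sqrt (by norm_num) (by norm_num)]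
          norm_num
      have := psi_strictAnti hm3 hb3 hcon
      have hpsim : psi m = 0 := by unfold psi; linarith [hmeq]
      have hpsib : 0 < psi (237/200 : ℝ) := by
        unfold psi; linarith [psi_b_pos]
      rw [hpsim] at this
      linarith
    have hmem1 : (237/200:ℝ) ∈ Set.Ici (1:ℝ) := by norm_num
    have hmem2 : m ∈ Set.Ici (1:ℝ) := by
      simp only [Set.mem_Ici]; linarith
    have hanti := id_mul_phi_anti hmem1 hmem2 hb_le_m
    calc afun π lhat ≤ m * phi m := hmain
      _ ≤ (237/200:ℝ) * phi (237/200) := hanti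
      _ ≤ 0.2345 := b_phi_b_le
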